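/- arXiv:1709.03429 — 10 statements merged into one kernel-verified Lean document; each statement's English description precedes it below -/
import Mathlib

section
/- For an event y ∈ ℝ⁴ and an event x ∈ ℝ⁴, there exists a future-pointing timelike vector u with (x − y) · u > 0 if and only if x does not lie in the closed backward light cone of y. -/
set_option maxHeartbeats 1000000
noncomputable section

abbrev M4 : Type := Fin 4 → ℝ

/-- Minkowski inner product with signature (+,-,-,-). -/
def mdot (x y : M4) : ℝ := x 0 * y 0 - x 1 * y 1 - x 2 * y 2 - x 3 * y 3

/-- `later x y`: x is not in the closed backward light cone of y. -/
def later (x y : M4) : Prop := ¬ (mdot (x - y) (x - y) ≥ 0 ∧ x 0 - y 0 ≤ 0)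

/-- Pointwise posteriority for sets. -/
def setLater (R S : Set M4) : Prop := ∀ x ∈ R, ∀ y ∈ S, later x y

/-- The string with apex x and direction e. -/
def mstring (x e : M4) : Set M4 := {z | ∃ s : ℝ, 0 ≤ s ∧ z = x + s • e}

/-- x is later than y iff some future-pointing timelike u has (x-y)·u > 0. -/
theorem later_iff_exists_timelike (x y : M4) :
    (∃ u : M4, mdot u u > 0 ∧ u 0 > 0 ∧ mdot (x - y) u > 0) ↔
    ¬ (mdot (x - y) (x - y) ≥ 0 ∧ x 0 ≤ y 0) := by
  set a := x 0 - y 0 with ha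
  set b := x 1 - y 1 with hb
  set c := x 2 - y 2 with hc
  set d := x 3 - y 3 with hd
  have hva : (x - y) 0 = a := rfl
  have hvb : (x - y) 1 = b := rfl
  have hvc : (x - y) 2 = c := rfl
  have hvd : (x - y) 3 = d := rfl
  have hvv : mdot (x - y) (x - y) = a * a - b * b - c * c - d * d := by
    simp [mdot, hva, hvb, hvc, hvd]
  constructor
  · rintro ⟨u, huu, hu0, hvu⟩ ⟨h1, h2⟩
    rw [hvv] at h1
    have hvu' : mdot (x - y) u = a * u 0 - b * u 1 - c * u 2 - d * u 3 := by
      simp [mdot, hva, hvb, hvc, hvd]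
    rw [hvu'] at hvu
    rw [mdot] at huu
    have h2' : a ≤ 0 := by linarith
    nlinarith [sq_nonneg (b * u 2 - c * u 1), sq_nonneg (b * u 3 - d * u 1),
      sq_nonneg (c * u 3 - d * u 2), sq_nonneg (a * u 0 + b * u 1 + c * u 2 + d * u 3),
      mul_nonneg (neg_nonneg.2 h2') (le_of_lt hu0), sq_nonneg (a * u 0 - b * u 1 - c * u 2 - d * u 3),
      mul_pos hu0 hu0]
  · intro h
    push_neg at h
    by_cases hcase : mdot (x - y) (x - y) ≥ 0
    · have h0 : y 0 < x 0 := h hcase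
      have hapos : 0 < a := by simp [ha]; linarith
      refine ⟨![a + 1, b, c, d], ?_, ?_, ?_⟩
      · show mdot _ _ > 0
        rw [hvv] at hcase
        simp [mdot]
        nlinarith
      · show (0:ℝ) < a + 1; linarith
      · rw [hvv] at hcase
        simp [mdot, hva, hvb, hvc, hvd]
        nlinarith
    · push_neg at hcase
      rw [hvv] at hcase
      have hs2 : a * a < b * b + c * c + d * d := by linarith
      set S := Real.sqrt (b * b + c * c + d * d) with hS
      have hSsq : S * S = b * b + c * c + d * d := by
        rw [hS]; exact Real.mul_self_sqrt (by nlinarith [sq_nonneg a])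
      have hSpos : 0 < S := by nlinarith [Real.sqrt_nonneg (b * b + c * c + d * d), sq_nonneg a]
      have haS : a < S ∧ -S < a := by
        constructor <;> nlinarith
      set t := (S - a) / (2 * (S * S)) with ht
      have htpos : 0 < t := by
        apply div_pos (by linarith [haS.1]) (by positivity)
      have htS2 : t * (S * S) = (S - a) / 2 := by
        field_simp [ht]
        rw [ht, div_mul_eq_mul_div, div_mul_eq_mul_div, div_eq_iff (mul_ne_zero two_ne_zero (mul_ne_zero hSpos.ne' hSpos.ne'))]
        ring
      refine ⟨![1, -(t * b), -(t * c), -(t * d)], ?_, ?_, ?_⟩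
      · show mdot _ _ > 0
        simp [mdot]
        have : t * b * (t * b) + t * c * (t * c) + t * d * (t * d) = t * t * (S * S) := by
          rw [hSsq]; ring
        have htlt : t * S < 1 := by
          rw [ht, div_mul_eq_mul_div, div_lt_one (by positivity)]
          nlinarith [haS.2, mul_pos hSpos hSpos]
        nlinarith [mul_pos htpos hSpos]
      · show (0:ℝ) < 1; norm_num
      · show mdot _ _ > 0
        simp [mdot, hva, hvb, hvc, hvd]
        have : a * 1 - b * -(t * b) - c * -(t * c) - d * -(t * d) = a + t * (S * S) := by
          rw [hSsq]; ring
        nlinarith [haS.2, htS2]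
end
end

section
/- Let Σ = a + u^⊥ be a spacelike hyperplane, where u is a future-pointing timelike vector and u^⊥ its Minkowski-orthogonal complement. Then an event x satisfies x ≻ Σ (x is later than every point of Σ) if and only if (x − a) · u > 0. -/
noncomputable section

set_option maxHeartbeats 1600000

/-- x is later than a spacelike hyperplane a + u^⊥ iff (x - a)·u > 0. -/
theorem later_hyperplane_iff (a u x : M4) (hu : mdot u u > 0) (hu0 : u 0 > 0) :
    setLater {x} {z : M4 | mdot (z - a) u = 0} ↔ mdot (x - a) u > 0 := by
  constructor
  · intro h
    by_contra hx
    push_neg at hx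
    set t : ℝ := -(mdot (x - a) u) / (mdot u u) with ht_def
    have ht : 0 ≤ t := div_nonneg (by linarith) hu.le
    have hz : mdot ((x + t • u) - a) u = 0 := by
      have hexp : mdot ((x + t • u) - a) u = mdot (x - a) u + t * mdot u u := by
        simp only [mdot, Pi.add_apply, Pi.sub_apply, Pi.smul_apply, smul_eq_mul]
        ring
      rw [hexp, ht_def, div_mul_cancel₀ _ (ne_of_gt hu)]
      ring
    have hl := h x rfl (x + t • u) hz
    apply hl
    constructor
    · have heq : mdot (x - (x + t • u)) (x - (x + t • u)) = t * t * mdot u u := by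
        simp only [mdot, Pi.add_apply, Pi.sub_apply, Pi.smul_apply, smul_eq_mul]
        ring
      rw [heq]
      exact le_trans (le_of_eq rfl) (mul_nonneg (mul_self_nonneg t) hu.le)
    · simp only [Pi.add_apply, Pi.smul_apply, smul_eq_mul]
      nlinarith [mul_nonneg ht hu0.le]
  · intro hxa x' hx' z hz
    simp only [Set.mem_singleton_iff] at hx'
    subst hx'
    simp only [Set.mem_setOf_eq] at hz
    rintro ⟨hA, hB⟩
    have hwu : mdot (x' - z) u > 0 := by
      have heq : mdot (x' - z) u = mdot (x' - a) u - mdot (z - a) u := by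
        simp only [mdot, Pi.sub_apply]; ring
      rw [heq, hz]; linarith
    simp only [mdot, Pi.sub_apply] at hA hwu hu
    set w0 := x' 0 - z 0 with hw0
    set w1 := x' 1 - z 1 with hw1
    set w2 := x' 2 - z 2 with hw2
    set w3 := x' 3 - z 3 with hw3
    have h1 : u 1 ^ 2 + u 2 ^ 2 + u 3 ^ 2 ≤ u 0 ^ 2 := by nlinarith [hu]
    have h2 : w1 ^ 2 + w2 ^ 2 + w3 ^ 2 ≤ w0 ^ 2 := by nlinarith [hA]
    have hS : (u 1 * w1 + u 2 * w2 + u 3 * w3) ^ 2 ≤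
        (u 1 ^ 2 + u 2 ^ 2 + u 3 ^ 2) * (w1 ^ 2 + w2 ^ 2 + w3 ^ 2) := by
      nlinarith [sq_nonneg (u 1 * w2 - u 2 * w1), sq_nonneg (u 1 * w3 - u 3 * w1),
        sq_nonneg (u 2 * w3 - u 3 * w2)]
    have ha : (u 1 ^ 2 + u 2 ^ 2 + u 3 ^ 2) * (w1 ^ 2 + w2 ^ 2 + w3 ^ 2)
        ≤ u 0 ^ 2 * (w1 ^ 2 + w2 ^ 2 + w3 ^ 2) :=
      mul_le_mul_of_nonneg_right h1 (by positivity)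
    have hb : u 0 ^ 2 * (w1 ^ 2 + w2 ^ 2 + w3 ^ 2) ≤ u 0 ^ 2 * w0 ^ 2 :=
      mul_le_mul_of_nonneg_left h2 (sq_nonneg _)
    have hS2 : (u 1 * w1 + u 2 * w2 + u 3 * w3) ^ 2 ≤ u 0 ^ 2 * w0 ^ 2 := by linarith
    have hneg : u 0 * w0 ≤ 0 := mul_nonpos_of_nonneg_of_nonpos hu0.le hB
    have hsum : u 1 * w1 + u 2 * w2 + u 3 * w3 + u 0 * w0 < 0 := by nlinarith [hwu, hneg]
    nlinarith [hS2, mul_pos hwu (by linarith : (0:ℝ) < -(u 1 * w1 + u 2 * w2 + u 3 * w3 + u 0 * w0))]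
end
end

section
/- Let R₁, R₂ be subsets of Minkowski space. If there is a spacelike hyperplane Σ = a + u^⊥ (u future-pointing timelike) with R₁ ≻ Σ and Σ ≻ R₂, then R₁ ≻ R₂. -/
noncomputable section

lemma later_of_plane_pos (a u x : M4) (hu : mdot u u > 0) (hu0 : u 0 > 0)
    (h : ∀ z : M4, mdot (z - a) u = 0 → later x z) : mdot (x - a) u > 0 := by
  set c : ℝ := mdot (x - a) u / mdot u u with hc
  have hz : mdot ((x - c • u) - a) u = 0 := by
    have : mdot ((x - c • u) - a) u = mdot (x - a) u - c * mdot u u := by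
      simp [mdot, Pi.sub_apply, Pi.smul_apply, smul_eq_mul]; ring
    rw [this, hc, div_mul_cancel₀ _ (ne_of_gt hu)]; ring
  have hl := h (x - c • u) hz
  have h1 : mdot (x - (x - c • u)) (x - (x - c • u)) = c * c * mdot u u := by
    simp [mdot, Pi.sub_apply, Pi.smul_apply, smul_eq_mul]; ring
  have h2 : x 0 - (x - c • u) 0 = c * u 0 := by
    simp [Pi.sub_apply, Pi.smul_apply, smul_eq_mul]
  by_contra hneg
  push_neg at hneg
  have hcle : c ≤ 0 := div_nonpos_of_nonpos_of_nonneg hneg hu.le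
  exact hl ⟨by rw [h1]; exact mul_nonneg (mul_self_nonneg c) hu.le, by rw [h2]; exact mul_nonpos_of_nonpos_of_nonneg hcle hu0.le⟩

lemma later_of_plane_neg (a u y : M4) (hu : mdot u u > 0) (hu0 : u 0 > 0)
    (h : ∀ z : M4, mdot (z - a) u = 0 → later z y) : mdot (y - a) u < 0 := by
  set c : ℝ := mdot (y - a) u / mdot u u with hc
  have hz : mdot ((y - c • u) - a) u = 0 := by
    have : mdot ((y - c • u) - a) u = mdot (y - a) u - c * mdot u u := by
      simp [mdot, Pi.sub_apply, Pi.smul_apply, smul_eq_mul]; ring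
    rw [this, hc, div_mul_cancel₀ _ (ne_of_gt hu)]; ring
  have hl := h (y - c • u) hz
  have h1 : mdot ((y - c • u) - y) ((y - c • u) - y) = c * c * mdot u u := by
    simp [mdot, Pi.sub_apply, Pi.smul_apply, smul_eq_mul]; ring
  have h2 : (y - c • u) 0 - y 0 = -(c * u 0) := by
    simp [Pi.sub_apply, Pi.smul_apply, smul_eq_mul]
  by_contra hneg
  push_neg at hneg
  have hcge : 0 ≤ c := div_nonneg hneg hu.le
  exact hl ⟨by rw [h1]; positivity,
    by rw [h2]; simpa using mul_nonneg hcge hu0.le⟩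

/-- A separating spacelike hyperplane implies posteriority. -/
theorem separating_hyperplane_later (R₁ R₂ : Set M4) (a u : M4)
    (hu : mdot u u > 0) (hu0 : u 0 > 0)
    (h₁ : setLater R₁ {z : M4 | mdot (z - a) u = 0})
    (h₂ : setLater {z : M4 | mdot (z - a) u = 0} R₂) :
    setLater R₁ R₂ := by
  intro x hx y hy
  have hx' : mdot (x - a) u > 0 :=
    later_of_plane_pos a u x hu hu0 (fun z hz => h₁ x hx z hz)
  have hy' : mdot (y - a) u < 0 :=
    later_of_plane_neg a u y hu hu0 (fun z hz => h₂ z hz y hy)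
  intro ⟨hcaus, htime⟩
  have hvu : mdot (x - y) u > 0 := by
    have : mdot (x - y) u = mdot (x - a) u - mdot (y - a) u := by
      simp [mdot, Pi.sub_apply]; ring
    rw [this]; linarith
  set v0 := x 0 - y 0; set v1 := x 1 - y 1; set v2 := x 2 - y 2; set v3 := x 3 - y 3
  have hcaus' : v0 * v0 - v1 * v1 - v2 * v2 - v3 * v3 ≥ 0 := by
    simpa [mdot, Pi.sub_apply] using hcaus
  have hvu' : v0 * u 0 - v1 * u 1 - v2 * u 2 - v3 * u 3 > 0 := by
    simpa [mdot, Pi.sub_apply] using hvu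
  have huu : u 0 * u 0 - u 1 * u 1 - u 2 * u 2 - u 3 * u 3 > 0 := hu
  nlinarith [sq_nonneg (v1 * u 2 - v2 * u 1), sq_nonneg (v1 * u 3 - v3 * u 1),
    sq_nonneg (v2 * u 3 - v3 * u 2), mul_nonpos_of_nonpos_of_nonneg htime hu0.le,
        sq_nonneg (v0 * u 0 - v1 * u 1 - v2 * u 2 - v3 * u 3),
    mul_pos hvu' hvu', mul_nonneg (neg_nonneg.2 htime) hu0.le]
end
end

section
/- Let S = x + ℝ≥0 · e be a string (e a spacelike unit vector, e·e = −1) and let z ∈ ℝ⁴ be an event with z ∉ S. Then either S ≻ {z} or {z} ≻ S, i.e., a string and an event disjoint from it are always comparable. -/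
noncomputable section

/-- A concave quadratic (leading coeff -1) nonneg at endpoints is nonneg in between. -/
lemma quad_concave (A B s t u : ℝ) (hs : A - 2*B*s - s^2 ≥ 0)
    (ht : A - 2*B*t - t^2 ≥ 0) (h1 : s ≤ u) (h2 : u ≤ t) :
    A - 2*B*u - u^2 ≥ 0 := by
  have h1' : (0:ℝ) ≤ u - s := by linarith
  have h2' : (0:ℝ) ≤ t - u := by linarith
  have h3' : (0:ℝ) ≤ t - s := by linarith
  have hs' : (0:ℝ) ≤ A - 2*B*s - s^2 := hs
  have ht' : (0:ℝ) ≤ A - 2*B*t - t^2 := ht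
  rcases eq_or_lt_of_le (h1.trans h2) with heq | hlt
  · have hu : u = s := le_antisymm (heq ▸ h2) h1
    rw [hu]; exact hs
  · nlinarith [mul_nonneg h2' hs', mul_nonneg h1' ht',
      mul_nonneg (mul_nonneg h1' h2') h3', hlt]

lemma sq_triple (a b c : ℝ) (h : a^2 + b^2 + c^2 ≤ 0) :
    a = 0 ∧ b = 0 ∧ c = 0 := by
  refine ⟨?_, ?_, ?_⟩ <;>
  · rw [← sq_eq_zero_iff]
    nlinarith [sq_nonneg a, sq_nonneg b, sq_nonneg c]

lemma key (e0 e1 e2 e3 w0 w1 w2 w3 s t : ℝ)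
    (he : e0^2 - e1^2 - e2^2 - e3^2 = -1)
    (hs : 0 ≤ s) (ht : 0 ≤ t)
    (hfs : (w0 - s*e0)^2 - (w1 - s*e1)^2 - (w2 - s*e2)^2 - (w3 - s*e3)^2 ≥ 0)
    (hgs : w0 - s*e0 ≥ 0)
    (hft : (w0 - t*e0)^2 - (w1 - t*e1)^2 - (w2 - t*e2)^2 - (w3 - t*e3)^2 ≥ 0)
    (hgt : w0 - t*e0 ≤ 0) :
    ∃ u : ℝ, 0 ≤ u ∧ w0 = u*e0 ∧ w1 = u*e1 ∧ w2 = u*e2 ∧ w3 = u*e3 := by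
  have eqf : ∀ v : ℝ, (w0 - v*e0)^2 - (w1 - v*e1)^2 - (w2 - v*e2)^2 - (w3 - v*e3)^2
      = (w0^2 - w1^2 - w2^2 - w3^2)
        - 2*(w0*e0 - w1*e1 - w2*e2 - w3*e3)*v - v^2 := by
    intro v; linear_combination v^2 * he
  rw [eqf s] at hfs
  rw [eqf t] at hft
  rcases lt_trichotomy e0 0 with h0 | h0 | h0
  · -- e0 < 0 : take u = w0 / e0, then t ≤ u ≤ s
    have hne : e0 ≠ 0 := ne_of_lt h0
    set u := w0 / e0 with hudef
    have hut : t ≤ u := by rw [hudef, le_div_iff_of_neg h0]; linarith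
    have hus : u ≤ s := by rw [hudef, div_le_iff_of_neg h0]; linarith
    have hfu := quad_concave _ _ t s u hft hfs hut hus
    rw [← eqf u] at hfu
    have hw0 : w0 - u*e0 = 0 := by rw [hudef]; field_simp; ring
    rw [hw0] at hfu
    have hsum : (w1 - u*e1)^2 + (w2 - u*e2)^2 + (w3 - u*e3)^2 ≤ 0 := by nlinarith [hfu]
    obtain ⟨z1, z2, z3⟩ := sq_triple _ _ _ hsum
    exact ⟨u, by linarith, by linarith, by linarith, by linarith, by linarith⟩
  · -- e0 = 0 : w0 = 0, take u = s
    subst h0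
    have hw0 : w0 = 0 := le_antisymm (by linarith) (by linarith)
    rw [← eqf s] at hfs
    have hsum : (w1 - s*e1)^2 + (w2 - s*e2)^2 + (w3 - s*e3)^2 ≤ 0 := by
      nlinarith [hfs, hw0]
    obtain ⟨z1, z2, z3⟩ := sq_triple _ _ _ hsum
    exact ⟨s, hs, by rw [hw0]; ring, by linarith, by linarith, by linarith⟩
  · -- e0 > 0 : take u = w0 / e0, then s ≤ u ≤ t
    have hne : e0 ≠ 0 := ne_of_gt h0
    set u := w0 / e0 with hudef
    have hus : s ≤ u := by rw [hudef, le_div_iff₀ h0]; linarith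
    have hut : u ≤ t := by rw [hudef, div_le_iff₀ h0]; linarith
    have hfu := quad_concave _ _ s t u hfs hft hus hut
    rw [← eqf u] at hfu
    have hw0 : w0 - u*e0 = 0 := by rw [hudef]; field_simp; ring
    rw [hw0] at hfu
    have hsum : (w1 - u*e1)^2 + (w2 - u*e2)^2 + (w3 - u*e3)^2 ≤ 0 := by nlinarith [hfu]
    obtain ⟨z1, z2, z3⟩ := sq_triple _ _ _ hsum
    exact ⟨u, by linarith, by linarith, by linarith, by linarith, by linarith⟩

/-- A string and an event disjoint from it are always comparable. -/
theorem string_event_comparable (x e z : M4) (he : mdot e e = -1)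
    (hz : z ∉ mstring x e) :
    setLater (mstring x e) {z} ∨ setLater {z} (mstring x e) := by
  by_contra h
  push_neg at h
  obtain ⟨h1, h2⟩ := h
  have H1 : ¬ ∀ s : ℝ, 0 ≤ s → later (x + s • e) z := by
    intro H
    exact h1 (by rintro p ⟨s, hs, rfl⟩ y rfl; exact H s hs)
  have H2 : ¬ ∀ t : ℝ, 0 ≤ t → later z (x + t • e) := by
    intro H
    exact h2 (by rintro y rfl q ⟨t, ht, rfl⟩; exact H t ht)
  push_neg at H1 H2
  obtain ⟨s, hs, hL1⟩ := H1
  obtain ⟨t, ht, hL2⟩ := H2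
  rw [later, not_not] at hL1 hL2
  obtain ⟨hps1, hps2⟩ := hL1
  obtain ⟨hqt1, hqt2⟩ := hL2
  have he' : e 0 ^ 2 - e 1 ^ 2 - e 2 ^ 2 - e 3 ^ 2 = -1 := by
    simpa [mdot, sq] using he
  have hfs : (z 0 - x 0 - s * e 0)^2 - (z 1 - x 1 - s * e 1)^2
      - (z 2 - x 2 - s * e 2)^2 - (z 3 - x 3 - s * e 3)^2 ≥ 0 := by
    have h := hps1
    simp only [mdot, Pi.sub_apply, Pi.add_apply, Pi.smul_apply, smul_eq_mul] at h
    nlinarith [h]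
  have hgs : (z 0 - x 0) - s * e 0 ≥ 0 := by
    have h := hps2
    simp only [Pi.add_apply, Pi.smul_apply, smul_eq_mul] at h
    linarith
  have hft : (z 0 - x 0 - t * e 0)^2 - (z 1 - x 1 - t * e 1)^2
      - (z 2 - x 2 - t * e 2)^2 - (z 3 - x 3 - t * e 3)^2 ≥ 0 := by
    have h := hqt1
    simp only [mdot, Pi.sub_apply, Pi.add_apply, Pi.smul_apply, smul_eq_mul] at h
    nlinarith [h]
  have hgt : (z 0 - x 0) - t * e 0 ≤ 0 := by
    have h := hqt2
    simp only [Pi.add_apply, Pi.smul_apply, smul_eq_mul] at h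
    linarith
  obtain ⟨u, hu, k0, k1, k2, k3⟩ := key (e 0) (e 1) (e 2) (e 3)
    (z 0 - x 0) (z 1 - x 1) (z 2 - x 2) (z 3 - x 3) s t he' hs ht
    (by linarith [hfs]) hgs (by linarith [hft]) hgt
  apply hz
  refine ⟨u, hu, ?_⟩
  funext i
  fin_cases i
  · show z 0 = (x + u • e) 0
    simp only [Pi.add_apply, Pi.smul_apply, smul_eq_mul]; linarith
  · show z 1 = (x + u • e) 1
    simp only [Pi.add_apply, Pi.smul_apply, smul_eq_mul]; linarith
  · show z 2 = (x + u • e) 2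
    simp only [Pi.add_apply, Pi.smul_apply, smul_eq_mul]; linarith
  · show z 3 = (x + u • e) 3
    simp only [Pi.add_apply, Pi.smul_apply, smul_eq_mul]; linarith
end
end

section
/- Weak transitivity for two strings and an event: let S₁, S₂ be strings and x an event with x ∉ S₁ ∪ S₂. If S₁ ≻ S₂ and it is not the case that {x} ≻ S₂, then S₁ ≻ {x}. -/
noncomputable section

lemma causal_trans (u v : M4) (hu : mdot u u ≥ 0) (hu0 : u 0 ≤ 0)
    (hv : mdot v v ≥ 0) (hv0 : v 0 ≤ 0) :
    mdot (u + v) (u + v) ≥ 0 ∧ (u + v) 0 ≤ 0 := by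
  simp only [mdot, Pi.add_apply] at *
  constructor
  · nlinarith [sq_nonneg (u 1 * v 2 - u 2 * v 1), sq_nonneg (u 1 * v 3 - u 3 * v 1),
      sq_nonneg (u 2 * v 3 - u 3 * v 2), mul_nonneg (neg_nonneg.2 hu0) (neg_nonneg.2 hv0),
      sq_nonneg (u 0 * v 0 - (u 1 * v 1 + u 2 * v 2 + u 3 * v 3)),
      sq_nonneg (u 0 * v 0 + (u 1 * v 1 + u 2 * v 2 + u 3 * v 3)),
      mul_nonneg hu hv]
  · linarith

/-- Weak transitivity for two strings and an event. -/
theorem weak_transitivity (x₁ e₁ x₂ e₂ x : M4)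
    (he₁ : mdot e₁ e₁ = -1) (he₂ : mdot e₂ e₂ = -1)
    (hx : x ∉ mstring x₁ e₁ ∪ mstring x₂ e₂)
    (h12 : setLater (mstring x₁ e₁) (mstring x₂ e₂))
    (hx2 : ¬ setLater {x} (mstring x₂ e₂)) :
    setLater (mstring x₁ e₁) {x} := by
  intro p hp y hy
  simp only [Set.mem_singleton_iff] at hy
  subst hy
  simp only [setLater, Set.mem_singleton_iff, not_forall] at hx2
  obtain ⟨z, hz, z2, hz2, hxz⟩ := hx2
  subst hz
  simp only [later, not_not] at hxz
  intro hpx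
  have h1 : mdot (p - z) (p - z) ≥ 0 := hpx.1
  have h2 : (p - z) 0 ≤ 0 := by simpa [Pi.sub_apply] using hpx.2
  have h3 : (z - z2) 0 ≤ 0 := by simpa [Pi.sub_apply] using hxz.2
  have h := causal_trans (p - z) (z - z2) h1 h2 hxz.1 h3
  have heq : p - z + (z - z2) = p - z2 := by abel
  rw [heq] at h
  exact h12 p hp z2 hz2 ⟨h.1, by simpa [Pi.sub_apply] using h.2⟩
end
end

section
/- Let S₁, …, S_r be strings among which there is a latest member (some S_i with S_i ≻ S_j for all j ≠ i), and let y₁, …, y_k be pairwise distinct events with y_m ∉ S_j for all m, j. Then the family {S₁, …, S_r, {y₁}, …, {y_k}} has a latest member. -/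
noncomputable section

/-- causal precedence -/
def prec (a b : M4) : Prop := mdot (a - b) (a - b) ≥ 0 ∧ a 0 ≤ b 0

lemma not_later_iff (a b : M4) : ¬ later a b ↔ prec a b := by
  unfold later prec
  rw [not_not]
  constructor
  · rintro ⟨h1, h2⟩; exact ⟨h1, by linarith⟩
  · rintro ⟨h1, h2⟩; exact ⟨h1, by linarith⟩

lemma key_ineq (u0 u1 u2 u3 v0 v1 v2 v3 : ℝ)
    (hu : u0*u0 - u1*u1 - u2*u2 - u3*u3 ≥ 0) (hu0 : 0 ≤ u0)
    (hv : v0*v0 - v1*v1 - v2*v2 - v3*v3 ≥ 0) (hv0 : 0 ≤ v0) :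
    u0*v0 - u1*v1 - u2*v2 - u3*v3 ≥ 0 := by
  nlinarith [sq_nonneg (u1*v2 - u2*v1), sq_nonneg (u1*v3 - u3*v1), sq_nonneg (u2*v3 - u3*v2),
    mul_nonneg hu0 hv0, sq_nonneg (u0*v0 + (u1*v1 + u2*v2 + u3*v3)),
    mul_nonneg (mul_nonneg hu0 hu0) (mul_nonneg hv0 hv0),
    mul_le_mul hu.le hv.le (by nlinarith) (by nlinarith)]

lemma eq_of_components {a b : M4} (h0 : a 0 = b 0) (h1 : a 1 = b 1) (h2 : a 2 = b 2)
    (h3 : a 3 = b 3) : a = b := by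
  funext i
  fin_cases i <;> assumption

lemma prec_trans {a b c : M4} (h1 : prec a b) (h2 : prec b c) : prec a c := by
  obtain ⟨hm1, ht1⟩ := h1
  obtain ⟨hm2, ht2⟩ := h2
  simp only [mdot, Pi.sub_apply] at hm1 hm2
  constructor
  · have key := key_ineq (b 0 - a 0) (b 1 - a 1) (b 2 - a 2) (b 3 - a 3)
      (c 0 - b 0) (c 1 - b 1) (c 2 - b 2) (c 3 - b 3)
      (by nlinarith) (by linarith) (by nlinarith) (by linarith)
    simp only [mdot, Pi.sub_apply]
    nlinarith
  · linarith

lemma prec_antisymm {a b : M4} (h1 : prec a b) (h2 : prec b a) : a = b := by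
  obtain ⟨hm1, ht1⟩ := h1
  obtain ⟨hm2, ht2⟩ := h2
  have h0 : a 0 = b 0 := le_antisymm ht1 ht2
  simp only [mdot, Pi.sub_apply] at hm1
  exact eq_of_components h0 (by nlinarith [sq_nonneg (a 2 - b 2), sq_nonneg (a 3 - b 3)])
    (by nlinarith [sq_nonneg (a 1 - b 1), sq_nonneg (a 3 - b 3)])
    (by nlinarith [sq_nonneg (a 1 - b 1), sq_nonneg (a 2 - b 2)])

lemma prec_lt {a b : M4} (h : prec a b) (hne : a ≠ b) : a 0 < b 0 := by
  rcases lt_or_eq_of_le h.2 with h' | h'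
  · exact h'
  · exfalso; apply hne
    obtain ⟨hm1, _⟩ := h
    simp only [mdot, Pi.sub_apply] at hm1
    exact eq_of_components h' (by nlinarith [sq_nonneg (a 2 - b 2), sq_nonneg (a 3 - b 3)])
      (by nlinarith [sq_nonneg (a 1 - b 1), sq_nonneg (a 3 - b 3)])
      (by nlinarith [sq_nonneg (a 1 - b 1), sq_nonneg (a 2 - b 2)])

lemma string_prec {X E z w : M4} (hE : mdot E E = -1)
    (hz : z ∈ mstring X E) (hw : w ∈ mstring X E) (h : prec z w) : z = w := by
  obtain ⟨s, hs, rfl⟩ := hz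
  obtain ⟨t, ht, rfl⟩ := hw
  have : s = t := by
    obtain ⟨hm, _⟩ := h
    simp only [mdot, Pi.sub_apply, Pi.add_apply, Pi.smul_apply, smul_eq_mul] at hm
    simp only [mdot] at hE
    nlinarith [sq_nonneg (s - t)]
  rw [this]

/-- Strings with a latest member together with distinct events still have a latest member. -/
theorem strings_points_latest (r k : ℕ) (x e : Fin r → M4) (y : Fin k → M4)
    (he : ∀ i, mdot (e i) (e i) = -1)
    (hy : Function.Injective y)
    (hys : ∀ m j, y m ∉ mstring (x j) (e j))
    (hlatest : ∃ i, ∀ j, j ≠ i → setLater (mstring (x i) (e i)) (mstring (x j) (e j))) :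
    ∃ i : Fin r ⊕ Fin k, ∀ j, j ≠ i →
      setLater (Sum.elim (fun i' => mstring (x i') (e i')) (fun m => {y m}) i)
               (Sum.elim (fun i' => mstring (x i') (e i')) (fun m => {y m}) j) := by
  classical
  obtain ⟨i, hi⟩ := hlatest
  by_cases hP : ∀ m, setLater (mstring (x i) (e i)) {y m}
  · refine ⟨Sum.inl i, ?_⟩
    rintro (j | m) hj
    · exact hi j (fun h => hj (by rw [h]))
    · exact hP m
  · push_neg at hP
    obtain ⟨m0, hm0⟩ := hP
    set T : Finset (Fin k) := Finset.univ.filter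
      (fun m => ¬ setLater (mstring (x i) (e i)) {y m}) with hT
    have hm0T : m0 ∈ T := by simp [hT, hm0]
    obtain ⟨m, hmT, hmax⟩ := T.exists_max_image (fun m => y m 0) ⟨m0, hm0T⟩
    -- extract z ∈ S_i with prec z (y m)
    have hmem : ∀ n ∈ T, ∃ z ∈ mstring (x i) (e i), prec z (y n) ∧ z ≠ y n := by
      intro n hn
      simp only [hT, Finset.mem_filter] at hn
      have := hn.2
      unfold setLater at this
      push_neg at this
      obtain ⟨z, hz, w, hw, hlw⟩ := this
      rw [Set.mem_singleton_iff] at hw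
      subst hw
      rw [not_later_iff] at hlw
      exact ⟨z, hz, hlw, fun h => hys n i (h ▸ hz)⟩
    obtain ⟨z, hzS, hzp, hzne⟩ := hmem m hmT
    -- y m is later than every string
    have hstr : ∀ j, ∀ w ∈ mstring (x j) (e j), later (y m) w := by
      intro j w hw
      by_contra hl
      rw [not_later_iff] at hl
      have hzw : prec z w := prec_trans hzp hl
      by_cases hji : j = i
      · subst hji
        have : z = w := string_prec (he j) hzS hw hzw
        subst this
        exact hzne (prec_antisymm hl hzp).symm
      · exact (not_later_iff z w).2 hzw (hi j hji z hzS w hw)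
    refine ⟨Sum.inr m, ?_⟩
    rintro (j | n) hj
    · intro a ha b hb
      simp only [Sum.elim_inr, Set.mem_singleton_iff] at ha
      simp only [Sum.elim_inl] at hb
      subst ha
      exact hstr j b hb
    · intro a ha b hb
      simp only [Sum.elim_inr, Set.mem_singleton_iff] at ha hb
      subst ha; subst hb
      have hne : n ≠ m := fun h => hj (by rw [h])
      by_contra hl
      rw [not_later_iff] at hl
      have hynne : y m ≠ y n := fun h => hne (hy h).symm
      have hlt : y m 0 < y n 0 := prec_lt hl hynne
      have hpzn : prec z (y n) := prec_trans hzp hl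
      have hnT : n ∈ T := by
        simp only [hT, Finset.mem_filter]
        exact ⟨Finset.mem_univ _, fun hsl => (not_later_iff z (y n)).2 hpzn (hsl z hzS (y n) rfl)⟩
      exact absurd (hmax n hnT) (not_le.2 hlt)
end
end

section
/- Let e, e' be spacelike unit vectors (e·e = e'·e' = −1) with e ≻ e' (e not in the closed backward light cone of e'). Then there exists a future-pointing timelike vector u with u · e > 0 and u · e' < 0. -/
set_option maxHeartbeats 1600000

noncomputable section

private lemma scaled_neg (K X : ℝ) (hK : 0 < K) (h : K * X < 0) : X < 0 := by
  by_contra hx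
  push_neg at hx
  nlinarith [mul_nonneg hK.le hx]

private lemma edge_lemma (Qv DD A1 A2 : ℝ) (hQ : 0 < Qv) (hDD : 0 < DD) (hA2 : 0 ≤ A2) :
    ∃ δ : ℝ, 0 < δ ∧ -Qv*DD + A1*δ + A2*δ^2 < 0 := by
  have hden : 0 < |A1| + A2 + 1 := by positivity
  refine ⟨min 1 (Qv*DD/(|A1| + A2 + 1)), ?_, ?_⟩
  · exact lt_min one_pos (div_pos (mul_pos hQ hDD) hden)
  · set δ := min 1 (Qv*DD/(|A1| + A2 + 1)) with hδdef
    have hδ0 : 0 < δ := lt_min one_pos (div_pos (mul_pos hQ hDD) hden)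
    have h1 : δ ≤ 1 := min_le_left _ _
    have h2 : δ ≤ Qv*DD/(|A1| + A2 + 1) := min_le_right _ _
    have h3 : δ*(|A1| + A2 + 1) ≤ Qv*DD := (le_div_iff₀ hden).1 h2
    have h4 : A1*δ ≤ |A1| * δ := mul_le_mul_of_nonneg_right (le_abs_self A1) hδ0.le
    have hd2 : δ^2 ≤ δ := by nlinarith [hδ0, h1]
    have h5 : A2*δ^2 ≤ A2*δ := mul_le_mul_of_nonneg_left hd2 hA2
    linarith

private lemma recipe (α β c s t : ℝ) (hs : 0 < s) (ht : 0 < t)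
    (hD : 0 < (α^2+1)*(β^2+1) - (α*β-c)^2)
    (hG : (α-s)^2*(β^2+1) - 2*(α-s)*(β+t)*(α*β-c) + (β+t)^2*(α^2+1)
        - ((α^2+1)*(β^2+1) - (α*β-c)^2) < 0) :
    ∃ x y : ℝ,
      x*(α^2+1) + y*(α*β-c) < α ∧
      β < x*(α*β-c) + y*(β^2+1) ∧
      x^2*(α^2+1) + 2*x*y*(α*β-c) + y^2*(β^2+1) < 1 := by
  set D := (α^2+1)*(β^2+1) - (α*β-c)^2 with hDdef
  have hD0 : D ≠ 0 := ne_of_gt hD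
  set x := ((α-s)*(β^2+1) - (β+t)*(α*β-c))/D with hx
  set y := ((β+t)*(α^2+1) - (α-s)*(α*β-c))/D with hy
  have e1 : x*(α^2+1) + y*(α*β-c) = α - s := by
    rw [hx, hy]
    field_simp
    rw [hDdef]
    ring
  have e2 : x*(α*β-c) + y*(β^2+1) = β + t := by
    rw [hx, hy]
    field_simp
    rw [hDdef]
    ring
  have e3 : x^2*(α^2+1) + 2*x*y*(α*β-c) + y^2*(β^2+1)
      = ((α-s)^2*(β^2+1) - 2*(α-s)*(β+t)*(α*β-c) + (β+t)^2*(α^2+1))/D := by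
    rw [hx, hy]
    field_simp
    rw [hDdef]
    ring
  refine ⟨x, y, ?_, ?_, ?_⟩
  · rw [e1]; linarith
  · rw [e2]; linarith
  · rw [e3, div_lt_one hD]; linarith

private lemma scalar_lemma (α β c : ℝ)
    (hcs : (α*β - c)^2 ≤ (α^2+1)*(β^2+1))
    (h : c > -1 ∨ α > β) :
    ∃ x y : ℝ,
      x*(α^2+1) + y*(α*β-c) < α ∧
      β < x*(α*β-c) + y*(β^2+1) ∧
      x^2*(α^2+1) + 2*x*y*(α*β-c) + y^2*(β^2+1) < 1 := by
  rcases eq_or_lt_of_le hcs with hDeq | hD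
  · -- degenerate case: equality in Cauchy–Schwarz
    set p := Real.sqrt (α^2+1) with hpdef
    set q := Real.sqrt (β^2+1) with hqdef
    have hp2 : p^2 = α^2+1 := Real.sq_sqrt (by positivity)
    have hq2 : q^2 = β^2+1 := Real.sq_sqrt (by positivity)
    have hp0 : 0 < p := Real.sqrt_pos.2 (by positivity)
    have hq0 : 0 < q := Real.sqrt_pos.2 (by positivity)
    have hap : α < p := by nlinarith [hp2, hp0]
    have hna : -p < α := by nlinarith [hp2, hp0]
    have hbq : β < q := by nlinarith [hq2, hq0]
    have hnb : -q < β := by nlinarith [hq2, hq0]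
    have hpq2 : (p*q)^2 = (α^2+1)*(β^2+1) := by rw [mul_pow, hp2, hq2]
    have hfac : (α*β - c - p*q) * (α*β - c + p*q) = 0 := by
      linear_combination hDeq - hpq2
    rcases mul_eq_zero.1 hfac with hFeq | hFeq
    · -- F = p*q
      have hF' : α*β - c = p*q := by linarith
      have hpq0 : 0 < p*q := mul_pos hp0 hq0
      have hpq1 : (α*β+1)^2 ≤ (p*q)^2 := by
        rw [hpq2]; nlinarith [sq_nonneg (α - β)]
      have hge : α*β + 1 ≤ p*q := by nlinarith [hpq1, hpq0]
      have hc : c ≤ -1 := by linarith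
      have hab : α > β := by
        rcases h with h' | h'
        · linarith
        · exact h'
      have hkey : β*p < α*q := by
        have hs1 : (α*q)^2 - (β*p)^2 = α^2 - β^2 := by
          rw [mul_pow, mul_pow, hp2, hq2]; ring
        rcases le_or_gt α 0 with hA | hA
        · have hb0 : β < 0 := lt_of_lt_of_le hab hA
          have hsum : α*q + β*p < 0 := by
            have h1 : α*q ≤ 0 := mul_nonpos_of_nonpos_of_nonneg hA hq0.le
            have h2 : β*p < 0 := mul_neg_of_neg_of_pos hb0 hp0
            linarith
          nlinarith [hs1, hsum, mul_pos (sub_pos.2 hab) (show (0:ℝ) < -(α+β) by linarith)]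
        · rcases le_or_gt β 0 with hB | hB
          · have h1 : 0 < α*q := mul_pos hA hq0
            have h2 : β*p ≤ 0 := mul_nonpos_of_nonpos_of_nonneg hB hp0.le
            linarith
          · have hsum : 0 < α*q + β*p := by
              have h1 : 0 < α*q := mul_pos hA hq0
              have h2 : 0 < β*p := mul_pos hB hp0
              linarith
            nlinarith [hs1, hsum, mul_pos (sub_pos.2 hab) (show (0:ℝ) < α+β by linarith)]
      have hlt : β/q < α/p := (div_lt_div_iff₀ hq0 hp0).2 hkey
      have hm1 : -1 < β/q := by rw [lt_div_iff₀ hq0]; linarith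
      have hm2 : α/p < 1 := (div_lt_one hp0).2 hap
      set w := (β/q + α/p)/2 with hwdef
      have hw1 : w < α/p := by rw [hwdef]; linarith
      have hw2 : β/q < w := by rw [hwdef]; linarith
      have hwlb : -1 < w := by rw [hwdef]; linarith
      have hwub : w < 1 := by rw [hwdef]; linarith
      refine ⟨w/p, 0, ?_, ?_, ?_⟩
      · have key : w/p*(α^2+1) + 0*(α*β-c) = w*p := by
          rw [← hp2]; field_simp
          all_goals ring
        rw [key]
        exact (lt_div_iff₀ hp0).1 hw1
      · have key : w/p*(α*β-c) + 0*(β^2+1) = w*q := by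
          rw [hF']; field_simp
          all_goals ring
        rw [key]
        exact (div_lt_iff₀ hq0).1 hw2
      · have key : (w/p)^2*(α^2+1) + 2*(w/p)*0*(α*β-c) + 0^2*(β^2+1) = w^2 := by
          rw [← hp2]; field_simp
          all_goals ring
        rw [key]
        nlinarith [hwlb, hwub]
    · -- F = -(p*q)
      have hF' : α*β - c = -(p*q) := by linarith
      have hm1 : -1 < α/p := by rw [lt_div_iff₀ hp0]; linarith
      have hm2 : -1 < -(β/q) := by
        have : β/q < 1 := (div_lt_one hq0).2 hbq
        linarith
      have hmlb : -1 < min (α/p) (-(β/q)) := lt_min hm1 hm2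
      have hmub : min (α/p) (-(β/q)) < 1 :=
        lt_of_le_of_lt (min_le_left _ _) ((div_lt_one hp0).2 hap)
      set w := (min (α/p) (-(β/q)) - 1)/2 with hwdef
      have hw1 : w < α/p := by
        have := min_le_left (α/p) (-(β/q))
        rw [hwdef]; linarith
      have hw2 : w < -(β/q) := by
        have := min_le_right (α/p) (-(β/q))
        rw [hwdef]; linarith
      have hwlb : -1 < w := by rw [hwdef]; linarith
      have hwub : w < 1 := by rw [hwdef]; linarith
      refine ⟨w/p, 0, ?_, ?_, ?_⟩
      · have key : w/p*(α^2+1) + 0*(α*β-c) = w*p := by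
          rw [← hp2]; field_simp
          all_goals ring
        rw [key]
        exact (lt_div_iff₀ hp0).1 hw1
      · have key : w/p*(α*β-c) + 0*(β^2+1) = -(w*q) := by
          rw [hF']; field_simp
          all_goals ring
        rw [key]
        have hwq : w*q < -β := by
          have hw2' : w < (-β)/q := by rw [neg_div]; exact hw2
          exact (lt_div_iff₀ hq0).1 hw2'
        linarith
      · have key : (w/p)^2*(α^2+1) + 2*(w/p)*0*(α*β-c) + 0^2*(β^2+1) = w^2 := by
          rw [← hp2]; field_simp
          all_goals ring
        rw [key]
        nlinarith [hwlb, hwub]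
  · -- nondegenerate case D > 0
    have hDpos : 0 < (α^2+1)*(β^2+1) - (α*β-c)^2 := by linarith
    rcases lt_or_ge 0 (α + β*c) with hg1 | hg1
    · -- g1 > 0
      obtain ⟨δ, hδ0, hδ⟩ := edge_lemma (β^2+1) ((α^2+1)*(β^2+1) - (α*β-c)^2)
        (2*(β^2+1)*((β+α*c)*(β^2+1) + (α*β-c)*(α+β*c))) ((α^2+1)*(β^2+1)^2)
        (by positivity) hDpos (by positivity)
      refine recipe α β c ((α+β*c)/(β^2+1)) δ (div_pos hg1 (by positivity)) hδ0 hDpos ?_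
      refine scaled_neg ((β^2+1)^2) _ (by positivity) ?_
      convert hδ using 1
      field_simp
      ring
    · rcases lt_or_ge (β + α*c) 0 with hg2 | hg2
      · -- g2 < 0
        obtain ⟨δ, hδ0, hδ⟩ := edge_lemma (α^2+1) ((α^2+1)*(β^2+1) - (α*β-c)^2)
          (-2*(α^2+1)*((α+β*c)*(α^2+1) + (α*β-c)*(β+α*c))) ((β^2+1)*(α^2+1)^2)
          (by positivity) hDpos (by positivity)
        refine recipe α β c δ ((-(β+α*c))/(α^2+1))
          hδ0 (div_pos (by linarith) (by positivity)) hDpos ?_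
        refine scaled_neg ((α^2+1)^2) _ (by positivity) ?_
        convert hδ using 1
        field_simp
        ring
      · -- g1 ≤ 0 ≤ g2 : necessarily c² < 1
        have hc2 : c^2 < 1 := by
          rcases lt_or_ge c 1 with hc1 | hc1
          · rcases lt_or_ge (-1) c with hcm | hcm
            · nlinarith
            · exfalso
              have hab : α > β := by
                rcases h with h' | h'
                · linarith
                · exact h'
              nlinarith [mul_pos (sub_pos.2 hab) (show (0:ℝ) < 1 - c by linarith)]
          · exfalso
            have hid : (1-c^2)*(((α^2+1)*(β^2+1) - (α*β-c)^2) - 1 + c^2)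
                = ((α+β*c)-(β+α*c))^2 + 2*(c-1)*(-((α+β*c)*(β+α*c))) := by ring
            have hprod : (0:ℝ) ≤ -((α+β*c)*(β+α*c)) := by
              nlinarith [mul_nonneg hg2 (neg_nonneg.2 hg1)]
            have h1 : 0 ≤ ((α+β*c)-(β+α*c))^2 + 2*(c-1)*(-((α+β*c)*(β+α*c))) := by
              have := mul_nonneg (show (0:ℝ) ≤ c-1 by linarith) hprod
              nlinarith [sq_nonneg ((α+β*c)-(β+α*c))]
            have hcle : c ≤ 1 := by
              by_contra hgt
              push_neg at hgt
              nlinarith [hid, h1, mul_pos hDpos (show (0:ℝ) < c^2-1 by nlinarith), sq_nonneg (c^2-1)]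
            have hc1' : c = 1 := le_antisymm hcle hc1
            rw [hc1'] at hg1 hg2 hDpos
            nlinarith [hDpos, hg1, hg2, sq_nonneg (α+β)]
        have hclt : c < 1 := by nlinarith [hc2, sq_nonneg (c-1)]
        obtain ⟨δ, hδ0, hδ⟩ := edge_lemma 1 (1-c^2)
          (2*(α-β)*(c-1)) ((α+β)^2 + 2 - 2*c)
          one_pos (by linarith) (by nlinarith [sq_nonneg (α+β)])
        refine recipe α β c δ δ hδ0 hδ0 hDpos ?_
        convert hδ using 1
        ring

/-- If e ≻ e' on the hyperboloid, a timelike u separates them strictly. -/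
theorem exists_separating_timelike (e e' : M4)
    (he : mdot e e = -1) (he' : mdot e' e' = -1)
    (h : ¬ (mdot (e - e') (e - e') ≥ 0 ∧ e 0 ≤ e' 0)) :
    ∃ u : M4, mdot u u > 0 ∧ u 0 > 0 ∧ mdot u e > 0 ∧ mdot u e' < 0 := by
  have hsub : mdot (e - e') (e - e') = -2 - 2 * mdot e e' := by
    have h1 : mdot (e - e') (e - e') = mdot e e - 2*(mdot e e') + mdot e' e' := by
      simp only [mdot, Pi.sub_apply]
      ring
    rw [h1, he, he']
    ring
  have hh : mdot e e' > -1 ∨ e 0 > e' 0 := by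
    by_cases hge : mdot (e - e') (e - e') ≥ 0
    · right
      by_contra hle
      push_neg at hle
      exact h ⟨hge, hle⟩
    · left
      rw [hsub] at hge
      push_neg at hge
      linarith
  have hP : e 1 * e 1 + e 2 * e 2 + e 3 * e 3 = e 0 * e 0 + 1 := by
    have h1 : e 0 * e 0 - e 1 * e 1 - e 2 * e 2 - e 3 * e 3 = -1 := he
    linarith
  have hQ : e' 1 * e' 1 + e' 2 * e' 2 + e' 3 * e' 3 = e' 0 * e' 0 + 1 := by
    have h1 : e' 0 * e' 0 - e' 1 * e' 1 - e' 2 * e' 2 - e' 3 * e' 3 = -1 := he'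
    linarith
  have hFdef : e 1 * e' 1 + e 2 * e' 2 + e 3 * e' 3 = e 0 * e' 0 - mdot e e' := by
    simp only [mdot]
    ring
  have hcs : (e 0 * e' 0 - mdot e e')^2 ≤ ((e 0)^2+1)*((e' 0)^2+1) := by
    have lag : (e 1 * e' 1 + e 2 * e' 2 + e 3 * e' 3)^2
        ≤ (e 1 * e 1 + e 2 * e 2 + e 3 * e 3) * (e' 1 * e' 1 + e' 2 * e' 2 + e' 3 * e' 3) := by
      nlinarith [sq_nonneg (e 1 * e' 2 - e 2 * e' 1), sq_nonneg (e 1 * e' 3 - e 3 * e' 1),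
        sq_nonneg (e 2 * e' 3 - e 3 * e' 2)]
    calc (e 0 * e' 0 - mdot e e')^2 = (e 1 * e' 1 + e 2 * e' 2 + e 3 * e' 3)^2 := by
          rw [hFdef]
      _ ≤ (e 1 * e 1 + e 2 * e 2 + e 3 * e 3) * (e' 1 * e' 1 + e' 2 * e' 2 + e' 3 * e' 3) := lag
      _ = ((e 0)^2+1)*((e' 0)^2+1) := by rw [hP, hQ]; ring
  obtain ⟨x, y, h1, h2, h3⟩ := scalar_lemma (e 0) (e' 0) (mdot e e') hcs hh
  set u : M4 := fun i => if i = 0 then 1 else x * e i + y * e' i with hu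
  have hu0 : u 0 = 1 := rfl
  have hu1 : u 1 = x * e 1 + y * e' 1 := rfl
  have hu2 : u 2 = x * e 2 + y * e' 2 := rfl
  have hu3 : u 3 = x * e 3 + y * e' 3 := rfl
  refine ⟨u, ?_, ?_, ?_, ?_⟩
  · have hm : mdot u u = 1 * 1 - (x * e 1 + y * e' 1) * (x * e 1 + y * e' 1)
        - (x * e 2 + y * e' 2) * (x * e 2 + y * e' 2)
        - (x * e 3 + y * e' 3) * (x * e 3 + y * e' 3) := by
      simp only [mdot, hu0, hu1, hu2, hu3]
    rw [hm]
    have hxx : x^2*(e 1 * e 1 + e 2 * e 2 + e 3 * e 3) = x^2*(e 0 * e 0 + 1) := by rw [hP]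
    have hyy : y^2*(e' 1 * e' 1 + e' 2 * e' 2 + e' 3 * e' 3) = y^2*(e' 0 * e' 0 + 1) := by rw [hQ]
    have hxy : (x*y)*(e 1 * e' 1 + e 2 * e' 2 + e 3 * e' 3) = (x*y)*(e 0 * e' 0 - mdot e e') := by
      rw [hFdef]
    nlinarith [hxx, hyy, hxy, h3]
  · rw [hu0]
    norm_num
  · have hm : mdot u e = 1 * e 0 - (x * e 1 + y * e' 1) * e 1
        - (x * e 2 + y * e' 2) * e 2 - (x * e 3 + y * e' 3) * e 3 := by
      simp only [mdot, hu0, hu1, hu2, hu3]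
    rw [hm]
    have hx : x*(e 1 * e 1 + e 2 * e 2 + e 3 * e 3) = x*(e 0 * e 0 + 1) := by rw [hP]
    have hy : y*(e 1 * e' 1 + e 2 * e' 2 + e 3 * e' 3) = y*(e 0 * e' 0 - mdot e e') := by
      rw [hFdef]
    nlinarith [hx, hy, h1]
  · have hm : mdot u e' = 1 * e' 0 - (x * e 1 + y * e' 1) * e' 1
        - (x * e 2 + y * e' 2) * e' 2 - (x * e 3 + y * e' 3) * e' 3 := by
      simp only [mdot, hu0, hu1, hu2, hu3]
    rw [hm]
    have hy : y*(e' 1 * e' 1 + e' 2 * e' 2 + e' 3 * e' 3) = y*(e' 0 * e' 0 + 1) := by rw [hQ]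
    have hx : x*(e 1 * e' 1 + e 2 * e' 2 + e 3 * e' 3) = x*(e 0 * e' 0 - mdot e e') := by
      rw [hFdef]
    nlinarith [hx, hy, h2]
end
end

section
/- Let D₁, D₂ be subsets of the spacelike hyperboloid H = {e : e·e = −1} and suppose there is a future-pointing timelike vector u with u·e₁ > 0 > u·e₂ for all e₁ ∈ D₁, e₂ ∈ D₂. If strings S₁ ⊂ ℝ₊·D₁ and S₂ ⊂ ℝ₊·D₂, then S₁ ≻ S₂. -/
noncomputable section

lemma mdot_le_zero (u d : M4) (hu : mdot u u > 0) (hu0 : u 0 > 0)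
    (hd : mdot d d ≥ 0) (hd0 : d 0 ≤ 0) : mdot u d ≤ 0 := by
  simp only [mdot] at *
  nlinarith [sq_nonneg (u 1 * d 2 - u 2 * d 1), sq_nonneg (u 1 * d 3 - u 3 * d 1),
    sq_nonneg (u 2 * d 3 - u 3 * d 2), sq_nonneg (u 0 * d 0 + u 1 * d 1 + u 2 * d 2 + u 3 * d 3),
    mul_nonneg hu0.le (neg_nonneg.mpr hd0), sq_nonneg (u 0 * d 0 - u 1 * d 1 - u 2 * d 2 - u 3 * d 3)]

/-- Strings in cones over separated direction sets are ordered. -/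
theorem cones_later (D₁ D₂ : Set M4)
    (hD₁ : D₁ ⊆ {v : M4 | mdot v v = -1}) (hD₂ : D₂ ⊆ {v : M4 | mdot v v = -1})
    (u : M4) (hu : mdot u u > 0) (hu0 : u 0 > 0)
    (hsep : ∀ e₁ ∈ D₁, ∀ e₂ ∈ D₂, mdot u e₁ > 0 ∧ mdot u e₂ < 0)
    (x₁ e₁ x₂ e₂ : M4) (he₁ : mdot e₁ e₁ = -1) (he₂ : mdot e₂ e₂ = -1)
    (hS₁ : mstring x₁ e₁ ⊆ {z : M4 | ∃ r : ℝ, 0 < r ∧ ∃ e' ∈ D₁, z = r • e'})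
    (hS₂ : mstring x₂ e₂ ⊆ {z : M4 | ∃ r : ℝ, 0 < r ∧ ∃ e' ∈ D₂, z = r • e'}) :
    setLater (mstring x₁ e₁) (mstring x₂ e₂) := by
  intro z₁ hz₁ z₂ hz₂
  obtain ⟨r₁, hr₁, f₁, hf₁, rfl⟩ := hS₁ hz₁
  obtain ⟨r₂, hr₂, f₂, hf₂, rfl⟩ := hS₂ hz₂
  obtain ⟨h1, h2⟩ := hsep f₁ hf₁ f₂ hf₂
  have key : mdot u (r₁ • f₁ - r₂ • f₂) > 0 := by
    have : mdot u (r₁ • f₁ - r₂ • f₂) = r₁ * mdot u f₁ - r₂ * mdot u f₂ := by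
      simp [mdot, Pi.smul_apply, smul_eq_mul]; ring
    rw [this]
    have := mul_pos hr₁ h1
    nlinarith [mul_pos hr₂ (neg_pos.mpr h2)]
  intro ⟨hcaus, htime⟩
  exact absurd key (not_lt.mpr (mdot_le_zero u _ hu hu0 hcaus htime))
end
end

section
/- Two disjoint strings contained in a common spacelike 2-plane are spacelike separated: if e, e' are spacelike unit vectors whose span is spacelike (every nonzero vector in span{e,e'} is spacelike), and the strings S(x,e), S(x',e') are disjoint with x' − x ∈ span{e,e'}, then every point of S(x,e) is spacelike separated from every point of S(x',e'). -/
noncomputable section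

/-- Two disjoint strings in a common spacelike 2-plane are spacelike separated. -/
theorem strings_in_spacelike_plane (x x' e e' : M4)
    (he : mdot e e = -1) (he' : mdot e' e' = -1)
    (hspan : ∀ v ∈ Submodule.span ℝ {e, e'}, v ≠ 0 → mdot v v < 0)
    (hdisj : mstring x e ∩ mstring x' e' = ∅)
    (hplane : x' - x ∈ Submodule.span ℝ {e, e'}) :
    ∀ z ∈ mstring x e, ∀ z' ∈ mstring x' e', mdot (z - z') (z - z') < 0 := by
  intro z hz z' hz'
  obtain ⟨s, hs, rfl⟩ := hz
  obtain ⟨s', hs', rfl⟩ := hz'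
  have he1 : e ∈ Submodule.span ℝ {e, e'} :=
    Submodule.subset_span (by simp)
  have he2 : e' ∈ Submodule.span ℝ {e, e'} :=
    Submodule.subset_span (by simp)
  have hmem : (x + s • e) - (x' + s' • e') ∈ Submodule.span ℝ {e, e'} := by
    have : (x + s • e) - (x' + s' • e') = s • e - s' • e' - (x' - x) := by
      abel
    rw [this]
    exact Submodule.sub_mem _ (Submodule.sub_mem _ (Submodule.smul_mem _ _ he1)
      (Submodule.smul_mem _ _ he2)) hplane
  have hne : (x + s • e) - (x' + s' • e') ≠ 0 := by
    intro h
    have heq : x + s • e = x' + s' • e' := by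
      have := sub_eq_zero.mp h
      exact this
    have : x + s • e ∈ mstring x e ∩ mstring x' e' :=
      ⟨⟨s, hs, rfl⟩, ⟨s', hs', heq⟩⟩
    rw [hdisj] at this
    exact this
  exact hspan _ hmem hne
end
end

section
/- String chopping for two strings: for any two disjoint strings S = S(x,e) and S' = S(x',e'), there exists s₀ > 0 such that, with S¹ = {x + t·e : 0 ≤ t ≤ s₀} and S² = {x + t·e : t ≥ s₀}, each of the pairs (S¹, S') and (S², S') is comparable (i.e., S¹ ≻ S' or S' ≻ S¹, and S² ≻ S' or S' ≻ S²). -/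
noncomputable section

set_option maxHeartbeats 1000000

/-! ### Auxiliary machinery -/

def FF (x x' e e' : M4) (t s : ℝ) : ℝ :=
  mdot (x + t • e - (x' + s • e')) (x + t • e - (x' + s • e'))

def GG (x x' e e' : M4) (t s : ℝ) : ℝ := (x + t • e - (x' + s • e')) 0

/-- For `ε = 1` this is the set of parameters `t` such that the point `x + t e` is
causally before some point of the second string; for `ε = -1` it is the set of `t`
such that some point of the second string is causally before `x + t e`. -/
def CC (x x' e e' : M4) (ε : ℝ) : Set ℝ :=
  {t | 0 ≤ t ∧ ∃ s, 0 ≤ s ∧ 0 ≤ FF x x' e e' t s ∧ ε * GG x x' e e' t s ≤ 0}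

lemma mdot_cross_nonneg (u v : M4) (hu : 0 ≤ mdot u u) (hv : 0 ≤ mdot v v)
    (h0 : 0 ≤ u 0 * v 0) : 0 ≤ mdot u v := by
  simp only [mdot] at *
  nlinarith [sq_nonneg (u 1 * v 2 - u 2 * v 1), sq_nonneg (u 1 * v 3 - u 3 * v 1),
    sq_nonneg (u 2 * v 3 - u 3 * v 2),
    sq_nonneg (u 0 * v 0 + u 1 * v 1 + u 2 * v 2 + u 3 * v 3),
    sq_nonneg (u 0 * v 0 - u 1 * v 1 - u 2 * v 2 - u 3 * v 3),
    mul_nonneg hu hv]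

lemma combo_causal (a b : ℝ) (ha : 0 ≤ a) (hb : 0 ≤ b) (u v : M4)
    (hu : 0 ≤ mdot u u) (hv : 0 ≤ mdot v v) (h0 : 0 ≤ u 0 * v 0) :
    0 ≤ mdot (a • u + b • v) (a • u + b • v) := by
  have hc := mdot_cross_nonneg u v hu hv h0
  simp only [mdot, Pi.add_apply, Pi.smul_apply, smul_eq_mul] at *
  nlinarith [mul_nonneg (mul_nonneg ha hb) hc, mul_nonneg (mul_nonneg ha ha) hu,
    mul_nonneg (mul_nonneg hb hb) hv]

lemma FF_expand (x x' e e' : M4) (he' : mdot e' e' = -1) (t s : ℝ) :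
    FF x x' e e' t s
      = mdot (x + t • e - x') (x + t • e - x')
        - 2 * s * mdot (x + t • e - x') e' - s ^ 2 := by
  simp only [FF, mdot, Pi.add_apply, Pi.sub_apply, Pi.smul_apply, smul_eq_mul] at *
  linear_combination (s^2) * he'

lemma s_le_of_FF (x x' e e' : M4) (he' : mdot e' e' = -1) {t s : ℝ} (hs : 0 ≤ s)
    (hF : 0 ≤ FF x x' e e' t s) :
    s ≤ |mdot (x + t • e - x') e'| + 1
        + max 0 (mdot (x + t • e - x') (x + t • e - x') + (mdot (x + t • e - x') e') ^ 2) := by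
  have h := FF_expand x x' e e' he' t s
  set a := mdot (x + t • e - x') e'
  set b := mdot (x + t • e - x') (x + t • e - x')
  have h2 : s ^ 2 + 2 * s * a ≤ b := by nlinarith
  nlinarith [neg_abs_le a, le_abs_self a, le_max_left 0 (b+a^2), le_max_right 0 (b+a^2),
    sq_nonneg (s+a), abs_nonneg a]

lemma contFF (x x' e e' : M4) : Continuous (fun p : ℝ × ℝ => FF x x' e e' p.1 p.2) := by
  simp only [FF, mdot, Pi.add_apply, Pi.sub_apply, Pi.smul_apply, smul_eq_mul]
  fun_prop

lemma contGG (x x' e e' : M4) : Continuous (fun p : ℝ × ℝ => GG x x' e e' p.1 p.2) := by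
  simp only [GG, Pi.add_apply, Pi.sub_apply, Pi.smul_apply, smul_eq_mul]
  fun_prop

lemma isClosed_CC (x x' e e' : M4) (he' : mdot e' e' = -1) (ε : ℝ) :
    IsClosed (CC x x' e e' ε) := by
  apply IsSeqClosed.isClosed
  intro tn t htn hlim
  have ht0 : 0 ≤ t := ge_of_tendsto' hlim fun n => (htn n).1
  obtain ⟨N, hN⟩ : ∃ N, ∀ n, tn n ≤ N := by
    obtain ⟨N, hN⟩ := hlim.bddAbove_range
    exact ⟨N, fun n => hN ⟨n, rfl⟩⟩
  choose sn hsn0 hsnF hsnG using fun n => (htn n).2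
  set Φ : ℝ → ℝ := fun u => |mdot (x + u • e - x') e'| + 1
      + max 0 (mdot (x + u • e - x') (x + u • e - x') + (mdot (x + u • e - x') e') ^ 2) with hΦ
  have hΦc : Continuous Φ := by
    simp only [hΦ, mdot, Pi.add_apply, Pi.sub_apply, Pi.smul_apply, smul_eq_mul]
    apply Continuous.add
    · apply Continuous.add
      · apply Continuous.abs; fun_prop
      · exact continuous_const
    · apply Continuous.max continuous_const; fun_prop
  obtain ⟨u₀, -, hu₀⟩ := isCompact_Icc.exists_isMaxOn (s := Set.Icc (0:ℝ) (max N 0))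
    ⟨0, by simp⟩ hΦc.continuousOn
  have hsM : ∀ n, sn n ∈ Set.Icc 0 (Φ u₀) := by
    intro n
    refine ⟨hsn0 n, le_trans (s_le_of_FF x x' e e' he' (hsn0 n) (hsnF n)) ?_⟩
    exact hu₀ ⟨(htn n).1, le_max_of_le_left (hN n)⟩
  obtain ⟨s, hsmem, φ, hφ, hsφ⟩ := isCompact_Icc.tendsto_subseq hsM
  have htφ : Filter.Tendsto (fun n => tn (φ n)) Filter.atTop (nhds t) :=
    hlim.comp hφ.tendsto_atTop
  have hpair : Filter.Tendsto (fun n => (tn (φ n), sn (φ n))) Filter.atTop (nhds (t, s)) :=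
    htφ.prodMk_nhds hsφ
  refine ⟨ht0, s, hsmem.1, ?_, ?_⟩
  · exact ge_of_tendsto' (((contFF x x' e e').tendsto (t, s)).comp hpair)
      (fun n => hsnF (φ n))
  · exact le_of_tendsto' ((continuous_const.mul (contGG x x' e e')).tendsto (t, s) |>.comp hpair)
      (fun n => hsnG (φ n))

/-- CC is order-convex. -/
lemma CC_convex (x x' e e' : M4) {ε : ℝ} (hε : ε = 1 ∨ ε = -1)
    {t₁ t₂ t : ℝ} (h₁ : t₁ ∈ CC x x' e e' ε) (h₂ : t₂ ∈ CC x x' e e' ε)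
    (hl : t₁ ≤ t) (hr : t ≤ t₂) : t ∈ CC x x' e e' ε := by
  obtain ⟨ht₁, s₁, hs₁, hF₁, hG₁⟩ := h₁
  obtain ⟨ht₂, s₂, hs₂, hF₂, hG₂⟩ := h₂
  rcases eq_or_lt_of_le (le_trans hl hr : t₁ ≤ t₂) with heq | hlt
  · have h1 : t = t₁ := le_antisymm (heq ▸ hr) hl
    exact h1 ▸ ⟨ht₁, s₁, hs₁, hF₁, hG₁⟩
  have hd : (0:ℝ) < t₂ - t₁ := by linarith
  set a : ℝ := (t₂ - t) / (t₂ - t₁) with ha_def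
  set b : ℝ := (t - t₁) / (t₂ - t₁) with hb_def
  have ha : 0 ≤ a := div_nonneg (by linarith) hd.le
  have hb : 0 ≤ b := div_nonneg (by linarith) hd.le
  set s : ℝ := a * s₁ + b * s₂ with hs_def
  have hvec : (x + t • e - (x' + s • e'))
      = a • (x + t₁ • e - (x' + s₁ • e')) + b • (x + t₂ • e - (x' + s₂ • e')) := by
    funext i
    simp only [Pi.add_apply, Pi.sub_apply, Pi.smul_apply, smul_eq_mul, hs_def, ha_def, hb_def]
    field_simp
    ring
  have h0 : 0 ≤ (x + t₁ • e - (x' + s₁ • e')) 0 * (x + t₂ • e - (x' + s₂ • e')) 0 := by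
    simp only [GG] at hG₁ hG₂
    rcases hε with h | h <;> subst h <;> nlinarith [hG₁, hG₂]
  refine ⟨le_trans ht₁ hl, s, by positivity, ?_, ?_⟩
  · show 0 ≤ FF x x' e e' t s
    unfold FF
    rw [hvec]
    exact combo_causal a b ha hb _ _ hF₁ hF₂ h0
  · show ε * GG x x' e e' t s ≤ 0
    unfold GG
    rw [hvec]
    simp only [Pi.add_apply, Pi.smul_apply, smul_eq_mul]
    unfold GG at hG₁ hG₂
    nlinarith [mul_nonneg ha (neg_nonneg.2 hG₁), mul_nonneg hb (neg_nonneg.2 hG₂)]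

/-- Disjointness of the strings implies the two causal-relation sets are disjoint. -/
lemma CC_disjoint (x x' e e' : M4) (he' : mdot e' e' = -1)
    (hdisj : mstring x e ∩ mstring x' e' = ∅) {t : ℝ}
    (hA : t ∈ CC x x' e e' 1) (hB : t ∈ CC x x' e e' (-1)) : False := by
  obtain ⟨ht, s, hs, hFs, hGs⟩ := hA
  obtain ⟨-, s', hs', hFs', hGs'⟩ := hB
  rw [one_mul] at hGs
  have hGs'' : 0 ≤ GG x x' e e' t s' := by nlinarith
  set u : M4 := x + t • e - (x' + s • e') with hu_def
  set v : M4 := (x' + s' • e') - (x + t • e) with hv_def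
  have hvF : 0 ≤ mdot v v := by
    have : mdot v v = FF x x' e e' t s' := by
      simp only [hv_def, FF, mdot, Pi.add_apply, Pi.sub_apply, Pi.smul_apply, smul_eq_mul]; ring
    rw [this]; exact hFs'
  have hv0 : v 0 ≤ 0 := by
    have : v 0 = - GG x x' e e' t s' := by
      simp only [hv_def, GG, Pi.add_apply, Pi.sub_apply, Pi.smul_apply, smul_eq_mul]; ring
    rw [this]; linarith
  have hu0 : u 0 ≤ 0 := hGs
  have hsum : u + v = (s' - s) • e' := by
    funext i
    simp only [hu_def, hv_def, Pi.add_apply, Pi.sub_apply, Pi.smul_apply, smul_eq_mul]; ring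
  have hcombo : 0 ≤ mdot (u + v) (u + v) := by
    have := combo_causal 1 1 zero_le_one zero_le_one u v hFs hvF
      (mul_nonneg (neg_nonneg.2 hu0) (neg_nonneg.2 hv0) |> fun h => by nlinarith)
    simpa using this
  have hss' : s' = s := by
    rw [hsum] at hcombo
    have : mdot ((s' - s) • e') ((s' - s) • e') = -((s' - s)^2) := by
      simp only [mdot, Pi.smul_apply, smul_eq_mul] at *
      linear_combination (s' - s)^2 * he'
    rw [this] at hcombo
    nlinarith [sq_nonneg (s' - s)]
  have hveq : v = -u := by
    funext i
    simp only [hu_def, hv_def, hss', Pi.neg_apply, Pi.add_apply, Pi.sub_apply, Pi.smul_apply,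
      smul_eq_mul]
    ring
  have hu00 : u 0 = 0 := by
    have : (-u) 0 ≤ 0 := hveq ▸ hv0
    simp only [Pi.neg_apply] at this
    linarith
  have huzero : ∀ i, u i = 0 := by
    have hF : 0 ≤ mdot u u := hFs
    simp only [mdot, hu00] at hF
    intro i
    fin_cases i
    · exact hu00
    · show u 1 = 0; nlinarith [sq_nonneg (u 1), sq_nonneg (u 2), sq_nonneg (u 3)]
    · show u 2 = 0; nlinarith [sq_nonneg (u 1), sq_nonneg (u 2), sq_nonneg (u 3)]
    · show u 3 = 0; nlinarith [sq_nonneg (u 1), sq_nonneg (u 2), sq_nonneg (u 3)]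
  have hpq : x + t • e = x' + s • e' := by
    funext i
    have := huzero i
    simp only [hu_def, Pi.sub_apply] at this
    linarith
  have : (x + t • e) ∈ mstring x e ∩ mstring x' e' :=
    ⟨⟨t, ht, rfl⟩, ⟨s, hs, hpq⟩⟩
  rw [hdisj] at this
  exact this

/-- Separation of two disjoint closed order-convex subsets of `[0, ∞)`. -/
lemma real_sep (A B : Set ℝ) (hAcl : IsClosed A) (hBcl : IsClosed B)
    (hAconv : ∀ t₁ t₂ t, t₁ ∈ A → t₂ ∈ A → t₁ ≤ t → t ≤ t₂ → t ∈ A)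
    (hBconv : ∀ t₁ t₂ t, t₁ ∈ B → t₂ ∈ B → t₁ ≤ t → t ≤ t₂ → t ∈ B)
    (hA0 : ∀ t ∈ A, 0 ≤ t) (hB0 : ∀ t ∈ B, 0 ≤ t)
    (hd : ∀ t, t ∈ A → t ∉ B) :
    ∃ s₀ : ℝ, 0 < s₀ ∧
      ((∀ t ∈ A, ¬ t ≤ s₀) ∨ (∀ t ∈ B, ¬ t ≤ s₀)) ∧
      ((∀ t ∈ A, ¬ s₀ ≤ t) ∨ (∀ t ∈ B, ¬ s₀ ≤ t)) := by
  have key : ∀ (A B : Set ℝ), IsClosed A → IsClosed B →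
      (∀ t ∈ A, 0 ≤ t) → (∀ t ∈ B, 0 ≤ t) →
      A.Nonempty → B.Nonempty → (∀ a ∈ A, ∀ b ∈ B, a < b) →
      ∃ s₀ : ℝ, 0 < s₀ ∧ (∀ t ∈ B, ¬ t ≤ s₀) ∧ (∀ t ∈ A, ¬ s₀ ≤ t) := by
    intro A B hAcl hBcl hA0 hB0 hAne hBne hlt
    obtain ⟨b₀, hb₀⟩ := id hBne
    have hbdd : BddAbove A := ⟨b₀, fun a ha => (hlt a ha b₀ hb₀).le⟩
    have hc : sSup A ∈ A := hAcl.csSup_mem hAne hbdd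
    have hdm : sInf B ∈ B := hBcl.csInf_mem hBne ⟨0, fun b hb => hB0 b hb⟩
    have hcd : sSup A < sInf B := hlt _ hc _ hdm
    refine ⟨(sSup A + sInf B) / 2, ?_, ?_, ?_⟩
    · have := hA0 _ hc; linarith
    · intro t ht; have := csInf_le ⟨0, fun b hb => hB0 b hb⟩ ht; linarith
    · intro t ht; have := le_csSup hbdd ht; linarith
  rcases A.eq_empty_or_nonempty with hA | hAne
  · exact ⟨1, one_pos, Or.inl (by simp [hA]), Or.inl (by simp [hA])⟩
  rcases B.eq_empty_or_nonempty with hB | hBne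
  · exact ⟨1, one_pos, Or.inr (by simp [hB]), Or.inr (by simp [hB])⟩
  obtain ⟨a₀, ha₀⟩ := hAne
  obtain ⟨b₀, hb₀⟩ := hBne
  rcases lt_trichotomy a₀ b₀ with h | h | h
  · have hlt : ∀ a ∈ A, ∀ b ∈ B, a < b := by
      intro a ha b hb
      by_contra hab
      push_neg at hab
      rcases le_or_gt b₀ a with h1 | h1
      · exact hd b₀ (hAconv a₀ a b₀ ha₀ ha h.le h1) hb₀
      · exact hd a ha (hBconv b b₀ a hb hb₀ hab h1.le)
    obtain ⟨s₀, h1, h2, h3⟩ := key A B hAcl hBcl hA0 hB0 ⟨a₀, ha₀⟩ ⟨b₀, hb₀⟩ hlt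
    exact ⟨s₀, h1, Or.inr h2, Or.inl h3⟩
  · exact absurd hb₀ (h ▸ hd a₀ ha₀)
  · have hlt : ∀ b ∈ B, ∀ a ∈ A, b < a := by
      intro b hb a ha
      by_contra hab
      push_neg at hab
      rcases le_or_gt a₀ b with h1 | h1
      · exact hd a₀ ha₀ (hBconv b₀ b a₀ hb₀ hb h.le h1)
      · exact hd b (hAconv a a₀ b ha ha₀ hab h1.le) hb
    obtain ⟨s₀, h1, h2, h3⟩ := key B A hBcl hAcl hB0 hA0 ⟨b₀, hb₀⟩ ⟨a₀, ha₀⟩ hlt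
    exact ⟨s₀, h1, Or.inl h2, Or.inr h3⟩

/-- String chopping for two disjoint strings. -/
theorem string_chopping_two (x x' e e' : M4)
    (he : mdot e e = -1) (he' : mdot e' e' = -1)
    (hdisj : mstring x e ∩ mstring x' e' = ∅) :
    ∃ s₀ : ℝ, 0 < s₀ ∧
      (setLater {z : M4 | ∃ t : ℝ, 0 ≤ t ∧ t ≤ s₀ ∧ z = x + t • e} (mstring x' e') ∨
       setLater (mstring x' e') {z : M4 | ∃ t : ℝ, 0 ≤ t ∧ t ≤ s₀ ∧ z = x + t • e}) ∧
      (setLater {z : M4 | ∃ t : ℝ, s₀ ≤ t ∧ z = x + t • e} (mstring x' e') ∨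
       setLater (mstring x' e') {z : M4 | ∃ t : ℝ, s₀ ≤ t ∧ z = x + t • e}) := by
  set A := CC x x' e e' 1 with hA_def
  set B := CC x x' e e' (-1) with hB_def
  obtain ⟨s₀, hs₀, hfirst, hsecond⟩ := real_sep A B
    (isClosed_CC x x' e e' he' 1) (isClosed_CC x x' e e' he' (-1))
    (fun t₁ t₂ t h1 h2 hl hr => CC_convex x x' e e' (Or.inl rfl) h1 h2 hl hr)
    (fun t₁ t₂ t h1 h2 hl hr => CC_convex x x' e e' (Or.inr rfl) h1 h2 hl hr)
    (fun t ht => ht.1) (fun t ht => ht.1)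
    (fun t ht hb => CC_disjoint x x' e e' he' hdisj ht hb)
  -- membership bridges
  have memA : ∀ t s : ℝ, 0 ≤ t → 0 ≤ s → ¬ later (x + t • e) (x' + s • e') → t ∈ A := by
    intro t s ht hs h
    rw [later, not_not] at h
    refine ⟨ht, s, hs, h.1, ?_⟩
    rw [one_mul]
    exact h.2
  have memB : ∀ t s : ℝ, 0 ≤ t → 0 ≤ s → ¬ later (x' + s • e') (x + t • e) → t ∈ B := by
    intro t s ht hs h
    rw [later, not_not] at h
    refine ⟨ht, s, hs, ?_, ?_⟩
    · have : FF x x' e e' t s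
          = mdot (x' + s • e' - (x + t • e)) (x' + s • e' - (x + t • e)) := by
        simp only [FF, mdot, Pi.add_apply, Pi.sub_apply, Pi.smul_apply, smul_eq_mul]; ring
      rw [this]
      exact h.1
    · have h2 := h.2
      have : (-1 : ℝ) * GG x x' e e' t s = (x' + s • e') 0 - (x + t • e) 0 := by
        simp only [GG, Pi.add_apply, Pi.sub_apply, Pi.smul_apply, smul_eq_mul]; ring
      rw [this]
      exact h2
  refine ⟨s₀, hs₀, ?_, ?_⟩
  · rcases hfirst with hf | hf
    · left
      rintro z ⟨t, ht0, hts, rfl⟩ y ⟨s, hs, rfl⟩ hlat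
      exact hf t (memA t s ht0 hs (not_not_intro hlat)) hts
    · right
      rintro y ⟨s, hs, rfl⟩ z ⟨t, ht0, hts, rfl⟩ hlat
      exact hf t (memB t s ht0 hs (not_not_intro hlat)) hts
  · rcases hsecond with hf | hf
    · left
      rintro z ⟨t, hts, rfl⟩ y ⟨s, hs, rfl⟩ hlat
      exact hf t (memA t s (le_trans hs₀.le hts) hs (not_not_intro hlat)) hts
    · right
      rintro y ⟨s, hs, rfl⟩ z ⟨t, hts, rfl⟩ hlat
      exact hf t (memB t s (le_trans hs₀.le hts) hs (not_not_intro hlat)) hts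
end
end
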